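/- (Theorem 2) Let N ≥ 2, let E : Fin N → Fin N → Prop and C : Fin N → Fin N → Bool, and suppose the LQN is an optimal PM diagram for the N-partite W state, meaning: every edge of E is maximally matchable; E has exactly N perfect matchings; and the map sending each perfect matching to its outcome string is a bijection from the set of perfect matchings onto the N strings s : Fin N → Bool having exactly one coordinate equal to false (↓). Then the red edges all leave one common vertex: there exists v : Fin N such that the set of edges { (a, j) | E a j ∧ C a j = false } equals { (v, j) | j : Fin N }; in particular E v j holds and C v j = false for every j, and every edge (a, j) of E with a ≠ v has C a j = true. -/

import Mathlib

open scoped Classical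

theorem Equiv.Perm.apply_inv_self {α : Type*} (f : Equiv.Perm α) (x : α) : f (f⁻¹ x) = x :=
  Equiv.apply_symm_apply f x

theorem Equiv.Perm.inv_apply_self {α : Type*} (f : Equiv.Perm α) (x : α) : f⁻¹ (f x) = x :=
  Equiv.symm_apply_apply f x

/-- Theorem 2: Suppose the LQN `(E, C)` is an optimal PM diagram for the
`N`-partite W state: every edge of `E` is maximally matchable, `E` has exactly `N`
perfect matchings, and the outcome-string map is a bijection from the set of perfect
matchings onto the `N` strings with exactly one `false` coordinate. Then all the red
(`false`) edges leave one common vertex `v`: the set of red edges is exactly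
`{(v, j) | j}`; in particular `E v j` holds with `C v j = false` for every `j`, and every
edge `(a, j)` with `a ≠ v` is blue. -/
theorem lqn_thm2_w_state (N : ℕ) (hN : 2 ≤ N)
    (E : Fin N → Fin N → Prop) (C : Fin N → Fin N → Bool)
    (hmm : ∀ a j : Fin N, E a j →
      ∃ σ : Equiv.Perm (Fin N), (∀ x, E x (σ x)) ∧ σ a = j)
    (hcard : (Finset.univ.filter
      (fun σ : Equiv.Perm (Fin N) => ∀ a, E a (σ a))).card = N)
    (hbij : Set.BijOn (fun σ : Equiv.Perm (Fin N) => fun j => C (σ⁻¹ j) j)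
      {σ : Equiv.Perm (Fin N) | ∀ a, E a (σ a)}
      {s : Fin N → Bool | (Finset.univ.filter (fun j => s j = false)).card = 1}) :
    ∃ v : Fin N,
      ({p : Fin N × Fin N | E p.1 p.2 ∧ C p.1 p.2 = false} =
        {p : Fin N × Fin N | p.1 = v}) ∧
      (∀ j, E v j ∧ C v j = false) ∧
      (∀ a j, E a j → a ≠ v → C a j = true) := by
  classical
  -- blue neighborhoods
  set nb : Fin N → Finset (Fin N) :=
    fun a => Finset.univ.filter (fun d => E a d ∧ C a d = true) with hnb
  -- every perfect matching has a unique false (red) position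
  have huniq : ∀ σ : Equiv.Perm (Fin N), (∀ a, E a (σ a)) →
      ∃ m : Fin N, ∀ j, C (σ⁻¹ j) j = false ↔ j = m := by
    intro σ hσ
    have h1 := hbij.mapsTo (Set.mem_setOf_eq ▸ hσ : σ ∈ {σ : Equiv.Perm (Fin N) | ∀ a, E a (σ a)})
    rw [Set.mem_setOf_eq, Finset.card_eq_one] at h1
    obtain ⟨m, hm⟩ := h1
    refine ⟨m, fun j => ?_⟩
    constructor
    · intro hj
      have : j ∈ Finset.univ.filter (fun j => C (σ⁻¹ j) j = false) := by
        simpa using hj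
      rw [hm] at this; simpa using this
    · intro hj; subst hj
      have : j ∈ ({j} : Finset (Fin N)) := Finset.mem_singleton_self j
      rw [← hm] at this; simpa using this
  -- for each m, a PM whose unique false position is m
  have hexists : ∀ m : Fin N, ∃ σ : Equiv.Perm (Fin N), (∀ a, E a (σ a)) ∧
      ∀ j, C (σ⁻¹ j) j = false ↔ j = m := by
    intro m
    have hmem : (fun j => if j = m then false else true) ∈
        {s : Fin N → Bool | (Finset.univ.filter (fun j => s j = false)).card = 1} := by
      rw [Set.mem_setOf_eq]
      have : (Finset.univ.filter (fun j => (if j = m then false else true) = false))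
          = {m} := by
        ext j; by_cases h : j = m <;> simp [h]
      rw [this, Finset.card_singleton]
    obtain ⟨σ, hσ, heq⟩ := hbij.surjOn hmem
    refine ⟨σ, hσ, fun j => ?_⟩
    have hj := congrFun heq j
    by_cases h : j = m
    · subst h; simp at hj; simp [hj]
    · simp [h] at hj; simp [h, hj]
  -- there is a Hall-deficient set for the blue graph
  have hdef : ∃ S : Finset (Fin N), (S.biUnion nb).card < S.card := by
    by_contra hc
    push_neg at hc
    obtain ⟨f, hfinj, hf⟩ :=
      (Finset.all_card_le_biUnion_card_iff_exists_injective nb).mp hc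
    let σ : Equiv.Perm (Fin N) := Equiv.ofBijective f
      (Finite.injective_iff_bijective.mp hfinj)
    have hσP : ∀ a, E a (σ a) := by
      intro a
      have h := hf a
      rw [hnb, Finset.mem_filter] at h
      exact h.2.1
    obtain ⟨m, hm⟩ := huniq σ hσP
    have htrue : C (σ⁻¹ m) m = true := by
      have h := hf (σ⁻¹ m)
      rw [hnb, Finset.mem_filter] at h
      have h2 := h.2.2
      have h3 : f (σ⁻¹ m) = σ (σ⁻¹ m) := rfl
      rw [h3, Equiv.Perm.apply_inv_self] at h2
      exact h2
    have hfalse := (hm m).mpr rfl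
    rw [hfalse] at htrue
    exact absurd htrue (by simp)
  obtain ⟨S, hS⟩ := hdef
  -- the blue neighborhood of S is empty
  have hT : S.biUnion nb = ∅ := by
    by_contra hne
    obtain ⟨m, hmT⟩ := Finset.nonempty_iff_ne_empty.mpr hne
    obtain ⟨σ, hσP, hm⟩ := hexists m
    have himg : ∀ a ∈ S, σ a ∈ S.biUnion nb := by
      intro a ha
      by_cases h : σ a = m
      · rwa [h]
      · refine Finset.mem_biUnion.mpr ⟨a, ha, ?_⟩
        rw [hnb]
        refine Finset.mem_filter.mpr ⟨Finset.mem_univ _, hσP a, ?_⟩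
        have h1 : ¬ C (σ⁻¹ (σ a)) (σ a) = false := fun hf => h ((hm _).mp hf)
        rw [Equiv.Perm.inv_apply_self] at h1
        simpa using h1
    have := Finset.card_le_card_of_injOn σ himg (fun x _ y _ h => σ.injective h)
    omega
  have hSpos : 0 < S.card := lt_of_le_of_lt (Nat.zero_le _) hS
  obtain ⟨v, hv⟩ := Finset.card_pos.mp hSpos
  -- for any PM with false position m, σ⁻¹ m = v
  have key : ∀ σ : Equiv.Perm (Fin N), (∀ a, E a (σ a)) →
      ∀ m, (∀ j, C (σ⁻¹ j) j = false ↔ j = m) → σ⁻¹ m = v := by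
    intro σ hσP m hm
    by_contra h
    have h1 : σ v ≠ m := by
      intro he
      exact h (by rw [← he, Equiv.Perm.inv_apply_self])
    have h2 : C v (σ v) = true := by
      have h3 : ¬ C (σ⁻¹ (σ v)) (σ v) = false := fun hf => h1 ((hm _).mp hf)
      rw [Equiv.Perm.inv_apply_self] at h3
      simpa using h3
    have h4 : σ v ∈ S.biUnion nb := by
      refine Finset.mem_biUnion.mpr ⟨v, hv, ?_⟩
      rw [hnb]
      exact Finset.mem_filter.mpr ⟨Finset.mem_univ _, hσP v, h2⟩
    rw [hT] at h4
    exact absurd h4 (Finset.notMem_empty _)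
  -- the red-edge facts
  have red : ∀ j, E v j ∧ C v j = false := by
    intro j
    obtain ⟨σ, hσP, hm⟩ := hexists j
    have hvj := key σ hσP j hm
    constructor
    · have h := hσP (σ⁻¹ j)
      rw [Equiv.Perm.apply_inv_self, hvj] at h
      exact h
    · have h := (hm j).mpr rfl
      rwa [hvj] at h
  have sub : ∀ a j, E a j → C a j = false → a = v := by
    intro a j hE hC
    obtain ⟨σ, hσP, hσa⟩ := hmm a j hE
    obtain ⟨m, hm⟩ := huniq σ hσP
    have hj : C (σ⁻¹ j) j = false := by
      rw [← hσa, Equiv.Perm.inv_apply_self, hσa]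
      exact hC
    have hjm : j = m := (hm j).mp hj
    have hvm := key σ hσP m hm
    rw [← hjm] at hvm
    rw [← hvm, ← hσa, Equiv.Perm.inv_apply_self]
  refine ⟨v, ?_, red, ?_⟩
  · ext ⟨a, j⟩
    simp only [Set.mem_setOf_eq]
    constructor
    · rintro ⟨hE, hC⟩
      exact sub a j hE hC
    · rintro rfl
      exact red j
  · intro a j hE hav
    by_contra h
    exact hav (sub a j hE (by simpa using h))
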